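/- Let A be a unital C*-algebra, τ a positive linear functional on A, and c > 0 a constant such that τ(p) ≥ c for every nonzero projection p ∈ A (the Kadison property with Kadison constant at least c). Then for every self-adjoint x ∈ A the spectrum of x has at most τ(1)/c connected components; in particular the spectrum of x has band structure, i.e., it is a finite union of disjoint compact intervals (each connected component of the compact set spec(x) ⊆ ℝ being a compact interval, possibly a single point). -/

import Mathlib

open Set

lemma ind_contOn {V K : Set ℝ} (h : ∀ k ∈ K, V ∈ nhds k ∨ Vᶜ ∈ nhds k) :
    ContinuousOn (Set.indicator V (fun _ => (1:ℝ))) K := by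
  intro k hk
  apply ContinuousAt.continuousWithinAt
  rcases h k hk with h' | h'
  · apply (continuousAt_const (y := (1:ℝ))).congr
    filter_upwards [h'] with t ht
    simp [Set.indicator_of_mem ht]
  · apply (continuousAt_const (y := (0:ℝ))).congr
    filter_upwards [h'] with t ht
    simp [Set.indicator_of_notMem ht]

lemma cont_Iio {K : Set ℝ} {s : ℝ} (hs : s ∉ K) :
    ContinuousOn (Set.indicator (Set.Iio s) (fun _ => (1:ℝ))) K := by
  apply ind_contOn
  intro k hk
  rcases lt_trichotomy k s with h | h | h
  · exact Or.inl (Iio_mem_nhds h)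
  · exact absurd (h ▸ hk) hs
  · exact Or.inr (Filter.mem_of_superset (Ioi_mem_nhds h)
      (fun t (ht : s < t) => (not_lt.mpr (le_of_lt ht) : ¬ t < s)))

lemma cont_Ico {K : Set ℝ} {u s : ℝ} (hu : u ∉ K) (hs : s ∉ K) :
    ContinuousOn (Set.indicator (Set.Ico u s) (fun _ => (1:ℝ))) K := by
  apply ind_contOn
  intro k hk
  rcases lt_trichotomy k u with h | h | h
  · exact Or.inr (Filter.mem_of_superset (Iio_mem_nhds h)
      (fun t ht hm => absurd hm.1 (not_le.mpr ht)))
  · exact absurd (h ▸ hk) hu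
  · rcases lt_trichotomy k s with h2 | h2 | h2
    · exact Or.inl (Filter.mem_of_superset (Ioo_mem_nhds h h2)
        (fun t ht => ⟨le_of_lt ht.1, ht.2⟩))
    · exact absurd (h2 ▸ hk) hs
    · exact Or.inr (Filter.mem_of_superset (Ioi_mem_nhds h2)
        (fun t ht hm => absurd hm.2 (not_lt.mpr (le_of_lt ht))))

lemma ind_idem (V : Set ℝ) (t : ℝ) :
    Set.indicator V (fun _ => (1:ℝ)) t * Set.indicator V (fun _ => (1:ℝ)) t
      = Set.indicator V (fun _ => (1:ℝ)) t := by
  by_cases h : t ∈ V <;> simp [h]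

lemma ind_split {u s : ℝ} (hus : u < s) (t : ℝ) :
    Set.indicator (Set.Iio s) (fun _ => (1:ℝ)) t
      = Set.indicator (Set.Iio u) (fun _ => (1:ℝ)) t
        + Set.indicator (Set.Ico u s) (fun _ => (1:ℝ)) t := by
  by_cases h1 : t < u
  · rw [Set.indicator_of_mem (show t ∈ Set.Iio s from h1.trans hus),
      Set.indicator_of_mem (show t ∈ Set.Iio u from h1),
      Set.indicator_of_notMem (show t ∉ Set.Ico u s from
        fun hm => absurd hm.1 (not_le.mpr h1))]
    norm_num
  · push_neg at h1
    rw [Set.indicator_of_notMem (show t ∉ Set.Iio u from not_lt.mpr h1)]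
    by_cases h2 : t < s
    · rw [Set.indicator_of_mem (show t ∈ Set.Iio s from h2),
        Set.indicator_of_mem (show t ∈ Set.Ico u s from ⟨h1, h2⟩)]
      norm_num
    · rw [Set.indicator_of_notMem (show t ∉ Set.Iio s from h2),
        Set.indicator_of_notMem (show t ∉ Set.Ico u s from fun hm => h2 hm.2)]
      norm_num

lemma cfc_idem {A : Type*} [CStarAlgebra A] (x : A) (hx : IsSelfAdjoint x)
    (f : ℝ → ℝ) (hf : ContinuousOn f (spectrum ℝ x)) (hf2 : ∀ t, f t * f t = f t) :
    cfc f x * cfc f x = cfc f x := by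
  rw [← cfc_mul f f x hf hf]
  exact cfc_congr (fun t _ => hf2 t)

lemma proj_lb {A : Type*} [CStarAlgebra A] [Nontrivial A] (τ : A →ₗ[ℂ] ℂ) (c : ℝ)
    (hK : ∀ p : A, p ≠ 0 → IsSelfAdjoint p → p * p = p → c ≤ (τ p).re)
    (x : A) (hx : IsSelfAdjoint x) (f : ℝ → ℝ)
    (hf : ContinuousOn f (spectrum ℝ x)) (hf2 : ∀ t, f t * f t = f t)
    (r : ℝ) (hr : r ∈ spectrum ℝ x) (hfr : f r = 1) :
    c ≤ (τ (cfc f x)).re := by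
  apply hK
  · intro h0
    have hm := cfc_map_spectrum (R := ℝ) (f := f) (a := x)
    rw [h0] at hm
    have h1 : (1:ℝ) ∈ f '' spectrum ℝ x := ⟨r, hr, hfr⟩
    rw [← hm, spectrum.zero_eq] at h1
    simp at h1
  · exact cfc_predicate f x
  · exact cfc_idem x hx f hf hf2

lemma main_count {A : Type*} [CStarAlgebra A] [Nontrivial A] (τ : A →ₗ[ℂ] ℂ)
    (c : ℝ) (hc : 0 < c)
    (hK : ∀ p : A, p ≠ 0 → IsSelfAdjoint p → p * p = p → c ≤ (τ p).re)
    (x : A) (hx : IsSelfAdjoint x) :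
    ∀ (n : ℕ) (F : Finset ℝ), F.card = n → ↑F ⊆ spectrum ℝ x →
    (∀ r ∈ F, ∀ r' ∈ F, r ≠ r' →
      connectedComponentIn (spectrum ℝ x) r ≠ connectedComponentIn (spectrum ℝ x) r') →
    ∀ s : ℝ, s ∉ spectrum ℝ x → (∀ r ∈ F, r < s) →
    (n : ℝ) * c ≤ (τ (cfc (Set.indicator (Set.Iio s) (fun _ => (1:ℝ))) x)).re := by
  intro n
  induction n with
  | zero =>
    intro F hcard hsub hdist s hs hlt
    simp only [Nat.cast_zero, zero_mul]
    by_cases h0 : cfc (Set.indicator (Set.Iio s) (fun _ => (1:ℝ))) x = 0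
    · rw [h0, map_zero]
      simp
    · have := hK _ h0 (cfc_predicate _ x)
        (cfc_idem x hx _ (cont_Iio hs) (ind_idem _))
      linarith
  | succ n ih =>
    intro F hcard hsub hdist s hs hlt
    have hne : F.Nonempty := Finset.card_pos.mp (hcard ▸ n.succ_pos)
    set r := F.max' hne with hr_def
    have hrF : r ∈ F := F.max'_mem hne
    set F' := F.erase r with hF'_def
    have hcard' : F'.card = n := by
      rw [hF'_def, Finset.card_erase_of_mem hrF, hcard]; omega
    by_cases hne' : F'.Nonempty
    · set r' := F'.max' hne' with hr'_def
      have hr'F' : r' ∈ F' := F'.max'_mem hne'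
      have hr'F : r' ∈ F := Finset.mem_of_mem_erase hr'F'
      have hr'ne : r' ≠ r := Finset.ne_of_mem_erase hr'F'
      have hr'lt : r' < r := lt_of_le_of_ne (F.le_max' r' hr'F) hr'ne
      have hgap : ∃ u, r' < u ∧ u < r ∧ u ∉ spectrum ℝ x := by
        by_contra hcon
        push_neg at hcon
        have hIcc : Set.Icc r' r ⊆ spectrum ℝ x := by
          intro t ht
          rcases eq_or_lt_of_le ht.1 with h | h
          · rw [← h]; exact hsub hr'F
          · rcases eq_or_lt_of_le ht.2 with h2 | h2
            · rw [h2]; exact hsub hrF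
            · exact hcon t h h2
        have hsubcc := (isPreconnected_Icc).subset_connectedComponentIn
          (Set.left_mem_Icc.mpr hr'lt.le) hIcc
        have hmem : r ∈ connectedComponentIn (spectrum ℝ x) r' :=
          hsubcc (Set.right_mem_Icc.mpr hr'lt.le)
        exact hdist r' hr'F r hrF hr'ne (connectedComponentIn_eq hmem)
      obtain ⟨u, hur', hur, huK⟩ := hgap
      have hus : u < s := hur.trans (hlt r hrF)
      have hsplit : Set.indicator (Set.Iio s) (fun _ => (1:ℝ))
          = fun t => Set.indicator (Set.Iio u) (fun _ => (1:ℝ)) t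
            + Set.indicator (Set.Ico u s) (fun _ => (1:ℝ)) t := funext (ind_split hus)
      rw [hsplit, cfc_add x _ _ (cont_Iio huK) (cont_Ico huK hs), map_add, Complex.add_re]
      have h1 := ih F' hcard' (fun t ht => hsub (Finset.mem_of_mem_erase ht))
        (fun a ha b hb hab => hdist a (Finset.mem_of_mem_erase ha) b
          (Finset.mem_of_mem_erase hb) hab) u huK
        (fun t ht => lt_of_le_of_lt (F'.le_max' t ht) hur')
      have h2 := proj_lb τ c hK x hx _ (cont_Ico huK hs) (ind_idem _)
        r (hsub hrF) (Set.indicator_of_mem (Set.mem_Ico.mpr ⟨hur.le, hlt r hrF⟩) _)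
      push_cast
      linarith
    · rw [Finset.not_nonempty_iff_eq_empty] at hne'
      have hn0 : n = 0 := by rw [← hcard', hne', Finset.card_empty]
      have h2 := proj_lb τ c hK x hx _ (cont_Iio hs) (ind_idem _)
        r (hsub hrF) (Set.indicator_of_mem (Set.mem_Iio.mpr (hlt r hrF)) _)
      rw [hn0]
      push_cast
      linarith


/-- Band structure: if a unital C*-algebra with a positive linear functional `τ` has the
Kadison property with constant `c > 0` (i.e. `τ(p) ≥ c` for every nonzero projection `p`),
then the spectrum of every self-adjoint element has at most `τ(1)/c` connected components,
and each connected component is a compact interval; in particular the spectrum is a finite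
union of disjoint compact intervals (band structure). -/
theorem spectrum_band_structure_of_kadison_property
    {A : Type*} [CStarAlgebra A] [Nontrivial A]
    (τ : A →ₗ[ℂ] ℂ)
    (hτpos : ∀ a : A, 0 ≤ (τ (star a * a)).re ∧ (τ (star a * a)).im = 0)
    (c : ℝ) (hc : 0 < c)
    (hK : ∀ p : A, p ≠ 0 → IsSelfAdjoint p → p * p = p → c ≤ (τ p).re)
    (x : A) (hx : IsSelfAdjoint x) :
    ((fun t => connectedComponentIn (spectrum ℝ x) t) '' (spectrum ℝ x)).Finite ∧
    (((fun t => connectedComponentIn (spectrum ℝ x) t) '' (spectrum ℝ x)).ncard : ℝ)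
        ≤ (τ 1).re / c ∧
    ∀ C ∈ (fun t => connectedComponentIn (spectrum ℝ x) t) '' (spectrum ℝ x),
      ∃ a b : ℝ, a ≤ b ∧ C = Set.Icc a b := by

  classical
  set K := spectrum ℝ x with hKdef
  set S := (fun t => connectedComponentIn K t) '' K with hSdef
  have hKcp : IsCompact K := spectrum.isCompact x
  have hτ1 : c ≤ (τ 1).re := hK 1 one_ne_zero (IsSelfAdjoint.one A) (one_mul 1)
  have key : ∀ T : Finset (Set ℝ), ↑T ⊆ S → (T.card : ℝ) * c ≤ (τ 1).re := by
    intro T hT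
    by_cases hKne : K.Nonempty
    · set s := sSup K + 1 with hs_def
      have hlt : ∀ t ∈ K, t < s := fun t ht =>
        lt_of_le_of_lt (le_csSup hKcp.bddAbove ht) (by rw [hs_def]; linarith)
      have hsK : s ∉ K := fun h => absurd (hlt s h) (lt_irrefl s)
      have hrep : ∀ C ∈ T, ∃ t, t ∈ K ∧ connectedComponentIn K t = C := by
        intro C hC
        obtain ⟨t0, ht0, hC0⟩ := hT hC
        exact ⟨t0, ht0, hC0⟩
      choose φ hφK hφcc using hrep
      set F : Finset ℝ := T.attach.image (fun C => φ C.1 C.2) with hF_def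
      have hFmem : ∀ r ∈ F, ∃ C : {C // C ∈ T}, φ C.1 C.2 = r := by
        intro r hr
        obtain ⟨C, hC, h⟩ := Finset.mem_image.mp hr
        exact ⟨C, h⟩
      have hFsub : ↑F ⊆ K := by
        intro r hr
        obtain ⟨C, h⟩ := hFmem r hr
        exact h ▸ hφK C.1 C.2
      have hdist : ∀ r ∈ F, ∀ r' ∈ F, r ≠ r' →
          connectedComponentIn K r ≠ connectedComponentIn K r' := by
        intro r hr r' hr' hne hcc
        obtain ⟨C, h⟩ := hFmem r hr
        obtain ⟨C', h'⟩ := hFmem r' hr'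
        rw [← h, ← h'] at hcc hne
        rw [hφcc C.1 C.2, hφcc C'.1 C'.2] at hcc
        exact hne (congrArg (fun D : {C // C ∈ T} => φ D.1 D.2) (Subtype.ext hcc))
      have hcard : F.card = T.card := by
        rw [hF_def, Finset.card_image_of_injOn, Finset.card_attach]
        intro C _ C' _ hCC'
        have hCC2 : φ C.1 C.2 = φ C'.1 C'.2 := hCC'
        have hC1 : C.1 = C'.1 := by
          rw [← hφcc C.1 C.2, ← hφcc C'.1 C'.2, hCC2]
        exact Subtype.ext hC1
      have hmain := main_count τ c hc hK x hx F.card F rfl hFsub hdist s hsK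
        (fun t ht => hlt t (hFsub ht))
      have hone : cfc (Set.indicator (Set.Iio s) (fun _ => (1:ℝ))) x = 1 := by
        have heq : cfc (Set.indicator (Set.Iio s) (fun _ => (1:ℝ))) x
            = cfc (fun _ : ℝ => (1:ℝ)) x :=
          cfc_congr (fun t ht => Set.indicator_of_mem (Set.mem_Iio.mpr (hlt t ht)) _)
        rw [heq]
        exact cfc_one ℝ x
      rw [hone, hcard] at hmain
      exact hmain
    · rw [Set.not_nonempty_iff_eq_empty] at hKne
      have hSe : S = ∅ := by rw [hSdef, hKne]; simp
      have hT0 : T = ∅ := Finset.coe_injective (by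
        rw [Finset.coe_empty]
        exact Set.subset_empty_iff.mp (hSe ▸ hT))
      rw [hT0]
      simp
      linarith
  have hcardle : ∀ T : Finset (Set ℝ), ↑T ⊆ S → (T.card : ℝ) ≤ (τ 1).re / c :=
    fun T hT => (le_div_iff₀ hc).mpr (key T hT)
  have hfin : S.Finite := by
    by_contra hinf
    have hinf' : S.Infinite := hinf
    obtain ⟨T, hTs, hTc⟩ := hinf'.exists_subset_card_eq (Nat.floor ((τ 1).re / c) + 1)
    have h2 := hcardle T hTs
    rw [hTc] at h2
    have h3 := Nat.lt_floor_add_one ((τ 1).re / c)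
    push_cast at h2
    linarith
  refine ⟨hfin, ?_, ?_⟩
  · have h2 := hcardle hfin.toFinset (by simp)
    rwa [← Set.ncard_eq_toFinset_card S hfin] at h2
  · rintro C ⟨t, ht, rfl⟩
    have htC : t ∈ connectedComponentIn K t := mem_connectedComponentIn ht
    have hconn : IsConnected (connectedComponentIn K t) :=
      isConnected_connectedComponentIn_iff.mpr ht
    have hclosed : IsClosed (connectedComponentIn K t) := by
      apply isClosed_of_closure_subset
      exact (isPreconnected_connectedComponentIn.closure).subset_connectedComponentIn
        (subset_closure htC) (closure_minimal (connectedComponentIn_subset K t) hKcp.isClosed)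
    have hcp : IsCompact (connectedComponentIn K t) :=
      hKcp.of_isClosed_subset hclosed (connectedComponentIn_subset K t)
    have hIcc := eq_Icc_of_connected_compact hconn hcp
    refine ⟨sInf (connectedComponentIn K t), sSup (connectedComponentIn K t), ?_, hIcc⟩
    have hmem2 := hIcc ▸ htC
    exact hmem2.1.trans hmem2.2
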